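/- Let B = [[a, c],[b, d]] over ℤ[i] with Δ = det B = ad − bc ≠ 0 and γ = gcd(a,c). Let Q = [0,1) + i[0,1) ⊆ ℂ. Then the set D = {(δ₁, δ₂) ∈ ℤ[i]² : δ₁ ∈ γQ ∩ ℤ[i], δ₂ ∈ (Δ/γ)Q ∩ ℤ[i]} is a complete set of coset representatives for the quotient ℤ[i]² / B ℤ[i]², i.e., every element of ℤ[i]² is congruent modulo the subgroup B ℤ[i]² to exactly one element of D. -/

import Mathlib

local notation "ℤ[i]" => GaussianInt
open Complex

lemma key_rep (g : ℤ[i]) (hg : g ≠ 0) (x : ℤ[i]) :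
    ∃! r : ℤ[i], (∃ q ∈ ({z : ℂ | 0 ≤ z.re ∧ z.re < 1 ∧ 0 ≤ z.im ∧ z.im < 1}), (r : ℂ) = (g : ℂ) * q)
      ∧ g ∣ (x - r) := by
  have hgC : (g : ℂ) ≠ 0 := by rwa [Ne, GaussianInt.toComplex_eq_zero]
  set t : ℂ := (x : ℂ) / (g : ℂ) with ht
  have hgt : (g : ℂ) * t = (x : ℂ) := by rw [ht, mul_comm, div_mul_cancel₀ _ hgC]
  set k : ℤ[i] := ⟨⌊t.re⌋, ⌊t.im⌋⟩ with hk
  have hkre : ((k : ℤ[i]) : ℂ).re = (⌊t.re⌋ : ℝ) := GaussianInt.re_toComplex _ _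
  have hkim : ((k : ℤ[i]) : ℂ).im = (⌊t.im⌋ : ℝ) := GaussianInt.im_toComplex _ _
  have hQ : (t - (k:ℂ)) ∈ ({z : ℂ | 0 ≤ z.re ∧ z.re < 1 ∧ 0 ≤ z.im ∧ z.im < 1}) := by
    refine ⟨?_, ?_, ?_, ?_⟩ <;>
      simp only [Complex.sub_re, Complex.sub_im, hkre, hkim, sub_nonneg, sub_lt_iff_lt_add]
    · exact Int.floor_le _
    · linarith [Int.lt_floor_add_one t.re]
    · exact Int.floor_le _
    · linarith [Int.lt_floor_add_one t.im]
  have hxgk : ((x - g * k : ℤ[i]) : ℂ) = (g : ℂ) * (t - (k:ℂ)) := by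
    rw [GaussianInt.toComplex_sub, GaussianInt.toComplex_mul, mul_sub, hgt]
  refine ⟨x - g * k, ⟨⟨t - k, hQ, hxgk⟩, k, by ring⟩, ?_⟩
  rintro r ⟨⟨q, hq, hrq⟩, m, hm⟩
  obtain ⟨n, hn⟩ : g ∣ r - (x - g * k) := by
    have h : r - (x - g * k) = g * k - (x - r) := by ring
    rw [h]; exact dvd_sub ⟨k, rfl⟩ ⟨m, hm⟩
  have hnC : (n : ℂ) = q - (t - (k:ℂ)) := by
    have h1 : ((r - (x - g * k) : ℤ[i]) : ℂ) = (g : ℂ) * n := by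
      rw [hn, GaussianInt.toComplex_mul]
    rw [GaussianInt.toComplex_sub, hrq, hxgk, ← mul_sub] at h1
    exact (mul_left_cancel₀ hgC h1.symm)
  obtain ⟨hq1, hq2, hq3, hq4⟩ := hq
  obtain ⟨h1, h2, h3, h4⟩ := hQ
  have hre : ((n.re : ℤ) : ℝ) = q.re - (t - (k:ℂ)).re := by
    rw [GaussianInt.intCast_re, hnC]; simp
  have him : ((n.im : ℤ) : ℝ) = q.im - (t - (k:ℂ)).im := by
    rw [GaussianInt.intCast_im, hnC]; simp
  have hre0 : n.re = 0 := by
    have l1 : (-1:ℤ) < n.re := by exact_mod_cast (by linarith : (-1:ℝ) < ((n.re : ℤ) : ℝ))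
    have l2 : n.re < 1 := by exact_mod_cast (by linarith : ((n.re : ℤ) : ℝ) < 1)
    omega
  have him0 : n.im = 0 := by
    have l1 : (-1:ℤ) < n.im := by exact_mod_cast (by linarith : (-1:ℝ) < ((n.im : ℤ) : ℝ))
    have l2 : n.im < 1 := by exact_mod_cast (by linarith : ((n.im : ℤ) : ℝ) < 1)
    omega
  have : n = 0 := Zsqrtd.ext hre0 him0
  rw [this, mul_zero] at hn
  exact sub_eq_zero.mp hn

theorem coset_representatives (a b c d : ℤ[i]) (hΔ : a * d - b * c ≠ 0) :
    let Δ : ℤ[i] := a * d - b * c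
    let γ : ℤ[i] := EuclideanDomain.gcd a c
    let Q : Set ℂ := {z | 0 ≤ z.re ∧ z.re < 1 ∧ 0 ≤ z.im ∧ z.im < 1}
    let D : Set (ℤ[i] × ℤ[i]) :=
      {δ | (∃ q ∈ Q, (δ.1 : ℂ) = (γ : ℂ) * q) ∧ (∃ q ∈ Q, (δ.2 : ℂ) = ((Δ / γ : ℤ[i]) : ℂ) * q)}
    let S : Set (ℤ[i] × ℤ[i]) :=
      {w | ∃ v : ℤ[i] × ℤ[i], w = (a * v.1 + c * v.2, b * v.1 + d * v.2)}
    ∀ w : ℤ[i] × ℤ[i], ∃! δ : ℤ[i] × ℤ[i], δ ∈ D ∧ (w.1 - δ.1, w.2 - δ.2) ∈ S := by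
  intro Δ γ Q D S w
  have hγ : γ ≠ 0 := by
    intro h
    rcases EuclideanDomain.gcd_eq_zero_iff.mp h with ⟨ha, hc⟩
    apply hΔ; rw [ha, hc]; ring
  set p : ℤ[i] := EuclideanDomain.gcdA a c with hp
  set s : ℤ[i] := EuclideanDomain.gcdB a c with hs
  have hbez : γ = a * p + c * s := EuclideanDomain.gcd_eq_gcd_ab a c
  obtain ⟨a', ha'⟩ : γ ∣ a := EuclideanDomain.gcd_dvd_left a c
  obtain ⟨c', hc'⟩ : γ ∣ c := EuclideanDomain.gcd_dvd_right a c
  have huv : a' * p + c' * s = 1 := by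
    apply mul_left_cancel₀ hγ
    rw [mul_one]
    calc γ * (a' * p + c' * s) = (γ * a') * p + (γ * c') * s := by ring
    _ = a * p + c * s := by rw [← ha', ← hc']
    _ = γ := hbez.symm
  set g₂ : ℤ[i] := a' * d - c' * b with hg₂def
  have hΔfac : Δ = γ * g₂ := by
    show a * d - b * c = γ * (a' * d - c' * b)
    rw [ha', hc']; ring
  have hg₂ : g₂ ≠ 0 := by
    intro h; apply hΔ
    have : Δ = 0 := by rw [hΔfac, h, mul_zero]
    exact this
  have hdiv : Δ / γ = g₂ := by rw [hΔfac]; exact mul_div_cancel_left₀ _ hγ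
  set e : ℤ[i] := b * p + d * s with he
  -- first coordinate representative
  obtain ⟨r₁, ⟨hr₁Q, hr₁dvd⟩, hr₁uniq⟩ := key_rep γ hγ w.1
  obtain ⟨m, hm⟩ := hr₁dvd
  -- second coordinate representative
  obtain ⟨r₂, ⟨hr₂Q, hr₂dvd⟩, hr₂uniq⟩ := key_rep g₂ hg₂ (w.2 - e * m)
  obtain ⟨n, hn⟩ := hr₂dvd
  refine ⟨(r₁, r₂), ⟨⟨hr₁Q, by rw [hdiv]; exact hr₂Q⟩, ?_⟩, ?_⟩
  · refine ⟨(p * m - c' * n, s * m + a' * n), ?_⟩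
    have h1 : a * (p * m - c' * n) + c * (s * m + a' * n) = γ * m := by
      rw [ha', hc']; linear_combination (γ * m) * huv
    have h2 : b * (p * m - c' * n) + d * (s * m + a' * n) = e * m + g₂ * n := by
      rw [he, hg₂def]; ring
    have hw2 : w.2 - r₂ = e * m + g₂ * n := by linear_combination hn
    rw [Prod.ext_iff]
    exact ⟨by rw [h1, ← hm], by rw [h2, ← hw2]⟩
  · rintro δ' ⟨⟨hδ'1, hδ'2⟩, ⟨v, hv⟩⟩
    rw [Prod.ext_iff] at hv
    obtain ⟨hv1, hv2⟩ := hv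
    dsimp only at hv1 hv2
    -- δ'.1 = r₁
    have hd1 : δ'.1 = r₁ := by
      apply hr₁uniq
      refine ⟨hδ'1, ⟨a' * v.1 + c' * v.2, ?_⟩⟩
      rw [hv1, ha', hc']; ring
    have hm' : w.1 - δ'.1 = γ * (a' * v.1 + c' * v.2) := by
      rw [hv1, ha', hc']; ring
    have hmm : a' * v.1 + c' * v.2 = m := by
      apply mul_left_cancel₀ hγ
      rw [← hm', hd1, hm]
    have hd2 : δ'.2 = r₂ := by
      apply hr₂uniq
      refine ⟨by rw [← hdiv]; exact hδ'2, ⟨-(s * v.1) + p * v.2, ?_⟩⟩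
      have : w.2 - δ'.2 = e * m + g₂ * (-(s * v.1) + p * v.2) := by
        rw [hv2, ← hmm, he, hg₂def]
        linear_combination (-(b * v.1 + d * v.2)) * huv
      linear_combination this
    rw [Prod.ext_iff]
    exact ⟨hd1, hd2⟩
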